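/- Let N ≥ 2 and let φ be an A_N-positive primitive automorphism of the free group F_N. Then there exist an integer k ≥ 1, a generator a ∈ A_N, and pure positive words p, s ∈ F_N such that φ^k(a) = p * a * s, i.e. the reduced word of φ^k(a) is the reduced word of p, followed by the letter a, followed by the reduced word of s, with p and s both nonempty. (Claim used in the paper's construction of the attracting subshift: "the primitivity condition implies that we can find an integer k such that φ^k(a) = p*a*s where p and s are non empty pure positive words".) -/

import Mathlib

/-- A word of the free group is pure positive if its reduced word is nonempty
and all its letters are positive. -/
def PurePos {N : ℕ} (v : FreeGroup (Fin N)) : Prop :=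
  v.toWord ≠ [] ∧ ∀ l ∈ v.toWord, l.2 = true

/-- An automorphism of the free group is `A_N`-positive if the image of each
generator is pure positive. -/
def IsPositive {N : ℕ} (φ : MulAut (FreeGroup (Fin N))) : Prop :=
  ∀ a : Fin N, PurePos (φ (FreeGroup.of a))

/-- An `A_N`-positive automorphism is primitive if some power sends each generator
to a word containing every positive letter. -/
def IsPrimitive {N : ℕ} (φ : MulAut (FreeGroup (Fin N))) : Prop :=
  ∃ k : ℕ, 1 ≤ k ∧ ∀ a b : Fin N, (b, true) ∈ ((φ ^ k) (FreeGroup.of a)).toWord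

/-- For an `A_N`-positive primitive automorphism `φ`, there exist `k ≥ 1`, a
generator `a`, and nonempty pure positive words `p`, `s` with
`φ^k(a) = p * a * s` without cancellation. -/
lemma reduce_pos {N : ℕ} (L : List (Fin N × Bool)) (h : ∀ l ∈ L, l.2 = true) :
    FreeGroup.reduce L = L := by
  induction L with
  | nil => rfl
  | cons x t ih =>
    have ht : ∀ l ∈ t, l.2 = true := fun l hl => h l (List.mem_cons_of_mem _ hl)
    rw [FreeGroup.reduce.cons, ih ht]
    cases t with
    | nil => rfl
    | cons y s =>
      have hx : x.2 = true := h x (List.mem_cons_self)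
      have hy : y.2 = true := ht y (List.mem_cons_self)
      simp [hx, hy]

lemma toWord_mk_pos {N : ℕ} (L : List (Fin N × Bool)) (h : ∀ l ∈ L, l.2 = true) :
    (FreeGroup.mk L).toWord = L := by
  rw [FreeGroup.toWord_mk, reduce_pos L h]

lemma toWord_mul_pos {N : ℕ} (x y : FreeGroup (Fin N))
    (hx : ∀ l ∈ x.toWord, l.2 = true) (hy : ∀ l ∈ y.toWord, l.2 = true) :
    (x * y).toWord = x.toWord ++ y.toWord := by
  conv_lhs => rw [← FreeGroup.mk_toWord (x := x), ← FreeGroup.mk_toWord (x := y)]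
  rw [FreeGroup.mul_mk, toWord_mk_pos]
  intro l hl
  rcases List.mem_append.mp hl with h | h
  exacts [hx l h, hy l h]

lemma map_mk_pos {N : ℕ} (ψ : MulAut (FreeGroup (Fin N))) (hψ : IsPositive ψ) :
    ∀ L : List (Fin N × Bool), (∀ l ∈ L, l.2 = true) →
      (ψ (FreeGroup.mk L)).toWord
        = (L.map fun l => (ψ (FreeGroup.of l.1)).toWord).flatten := by
  intro L
  induction L with
  | nil =>
    intro _
    rw [← FreeGroup.one_eq_mk, map_one, FreeGroup.toWord_one, List.map_nil, List.flatten_nil]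
  | cons x t ih =>
    intro h
    have hx : x.2 = true := h x (List.mem_cons_self)
    have ht : ∀ l ∈ t, l.2 = true := fun l hl => h l (List.mem_cons_of_mem _ hl)
    have hxeq : x = (x.1, true) := Prod.ext rfl hx
    have hsplit : FreeGroup.mk (x :: t) = FreeGroup.of x.1 * FreeGroup.mk t := by
      rw [FreeGroup.of, FreeGroup.mul_mk]
      exact congrArg FreeGroup.mk (by rw [List.singleton_append, ← hxeq])
    have hjoin : ∀ l ∈ (t.map fun l => (ψ (FreeGroup.of l.1)).toWord).flatten, l.2 = true := by
      intro l hl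
      rw [List.mem_flatten] at hl
      obtain ⟨B, hB, hlB⟩ := hl
      rw [List.mem_map] at hB
      obtain ⟨m, _, rfl⟩ := hB
      exact (hψ m.1).2 l hlB
    rw [hsplit, map_mul, toWord_mul_pos _ _ ((hψ x.1).2) (by rw [ih ht]; exact hjoin), ih ht,
      List.map_cons, List.flatten_cons]

lemma flatten_pos {N : ℕ} (ψ : MulAut (FreeGroup (Fin N))) (hψ : IsPositive ψ)
    (L : List (Fin N × Bool)) :
    ∀ l ∈ (L.map fun l => (ψ (FreeGroup.of l.1)).toWord).flatten, l.2 = true := by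
  intro l hl
  rw [List.mem_flatten] at hl
  obtain ⟨B, hB, hlB⟩ := hl
  rw [List.mem_map] at hB
  obtain ⟨m, _, rfl⟩ := hB
  exact (hψ m.1).2 l hlB

lemma IsPositive.mul {N : ℕ} {φ ψ : MulAut (FreeGroup (Fin N))}
    (hφ : IsPositive φ) (hψ : IsPositive ψ) : IsPositive (φ * ψ) := by
  intro a
  have h := hψ a
  have key : (φ * ψ) (FreeGroup.of a)
      = φ (FreeGroup.mk ((ψ (FreeGroup.of a)).toWord)) := by
    rw [FreeGroup.mk_toWord]; rfl
  rw [PurePos, key, map_mk_pos φ hφ _ h.2]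
  refine ⟨?_, flatten_pos φ hφ _⟩
  obtain ⟨x, t, hxt⟩ := List.exists_cons_of_ne_nil h.1
  rw [hxt, List.map_cons, List.flatten_cons]
  intro hc
  exact (hφ x.1).1 (List.append_eq_nil_iff.mp hc).1

lemma IsPositive.pow {N : ℕ} {φ : MulAut (FreeGroup (Fin N))}
    (hφ : IsPositive φ) (n : ℕ) : IsPositive (φ ^ n) := by
  induction n with
  | zero =>
    intro a
    refine ⟨?_, ?_⟩ <;> simp [FreeGroup.toWord_of]
  | succ m ih =>
    rw [pow_succ]
    exact IsPositive.mul ih hφ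

theorem exists_pow_generator_sandwich {N : ℕ} (hN : 2 ≤ N)
    (φ : MulAut (FreeGroup (Fin N))) (hpos : IsPositive φ) (hprim : IsPrimitive φ) :
    ∃ (k : ℕ) (a : Fin N) (p s : FreeGroup (Fin N)), 1 ≤ k ∧
      PurePos p ∧ PurePos s ∧
      ((φ ^ k) (FreeGroup.of a)).toWord = p.toWord ++ [(a, true)] ++ s.toWord := by
  obtain ⟨k, hk1, hk⟩ := hprim
  set ψ : MulAut (FreeGroup (Fin N)) := φ ^ k with hψdef
  have hψ : IsPositive ψ := IsPositive.pow hpos k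
  set a0 : Fin N := ⟨0, by omega⟩ with ha0
  set a1 : Fin N := ⟨1, by omega⟩ with ha1
  have hne : a0 ≠ a1 := by
    intro h
    rw [ha0, ha1, Fin.mk.injEq] at h
    exact absurd h (by norm_num)
  -- every image of a generator has at least two letters
  have two_elems : ∀ b : Fin N, ∃ x y t, (ψ (FreeGroup.of b)).toWord = x :: y :: t := by
    intro b
    have h0 := hk b a0
    have h1 := hk b a1
    cases hw : (ψ (FreeGroup.of b)).toWord with
    | nil => rw [hw] at h0; simp at h0
    | cons x t =>
      cases t with
      | nil =>
        rw [hw] at h0 h1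
        simp only [List.mem_singleton] at h0 h1
        exact absurd (by rw [← h0] at h1; exact (Prod.mk.injEq _ _ _ _).mp h1.symm |>.1) hne
      | cons y s => exact ⟨x, y, s, rfl⟩
  set f : (Fin N × Bool) → List (Fin N × Bool) := fun l => (ψ (FreeGroup.of l.1)).toWord with hf
  obtain ⟨c1, c2, r1, hL1⟩ := two_elems a0
  set w2 : FreeGroup (Fin N) := ψ (ψ (FreeGroup.of a0)) with hw2def
  have hw2 : w2 = ψ (FreeGroup.mk ((ψ (FreeGroup.of a0)).toWord)) := by
    rw [FreeGroup.mk_toWord]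
  have hflat : w2.toWord = (((ψ (FreeGroup.of a0)).toWord).map f).flatten := by
    rw [hw2, map_mk_pos ψ hψ _ (hψ a0).2]
  have hw2pos : ∀ l ∈ w2.toWord, l.2 = true := by
    rw [hflat]; exact flatten_pos ψ hψ _
  obtain ⟨d1, d2, rB1, hB1⟩ := two_elems c1.1
  obtain ⟨e1, e2, rB2, hB2⟩ := two_elems c2.1
  have hL2 : w2.toWord = d1 :: d2 :: (rB1 ++ (e1 :: e2 :: rB2) ++ (r1.map f).flatten) := by
    rw [hflat, hL1, List.map_cons, List.map_cons, List.flatten_cons, List.flatten_cons,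
      hf]
    simp only [hB1, hB2]
    simp [List.append_assoc]
  obtain ⟨d3, r, hM⟩ : ∃ d3 r,
      rB1 ++ (e1 :: e2 :: rB2) ++ (r1.map f).flatten = d3 :: r := by
    cases rB1 with
    | nil => exact ⟨e1, e2 :: rB2 ++ (r1.map f).flatten, by simp⟩
    | cons z zs => exact ⟨z, zs ++ (e1 :: e2 :: rB2) ++ (r1.map f).flatten, by simp⟩
  rw [hM] at hL2
  set w3 : FreeGroup (Fin N) := ψ w2 with hw3def
  have hL3 : w3.toWord = f d1 ++ (f d2 ++ (f d3 ++ (r.map f).flatten)) := by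
    rw [hw3def, show ψ w2 = ψ (FreeGroup.mk w2.toWord) by rw [FreeGroup.mk_toWord],
      map_mk_pos ψ hψ _ hw2pos, hL2]
    simp [List.flatten_cons]; rfl
  obtain ⟨u, v, huv⟩ := List.append_of_mem (hk d2.1 a0)
  have hfu : f d2 = u ++ (a0, true) :: v := huv
  -- positivity facts
  have hupos : ∀ l ∈ u, l.2 = true := fun l hl =>
    (hψ d2.1).2 l (by rw [huv]; exact List.mem_append_left _ hl)
  have hvpos : ∀ l ∈ v, l.2 = true := fun l hl =>
    (hψ d2.1).2 l (by rw [huv]; exact List.mem_append_right _ (List.mem_cons_of_mem _ hl))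
  set pl : List (Fin N × Bool) := f d1 ++ u with hpl
  set sl : List (Fin N × Bool) := v ++ f d3 ++ (r.map f).flatten with hsl
  have hplpos : ∀ l ∈ pl, l.2 = true := by
    intro l hl
    rcases List.mem_append.mp hl with h | h
    exacts [(hψ d1.1).2 l h, hupos l h]
  have hslpos : ∀ l ∈ sl, l.2 = true := by
    intro l hl
    rcases List.mem_append.mp hl with h | h
    · rcases List.mem_append.mp h with h' | h'
      exacts [hvpos l h', (hψ d3.1).2 l h']
    · exact flatten_pos ψ hψ r l h
  refine ⟨k + (k + k), a0, FreeGroup.mk pl, FreeGroup.mk sl, by omega, ?_, ?_, ?_⟩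
  · refine ⟨?_, by rw [toWord_mk_pos pl hplpos]; exact hplpos⟩
    rw [toWord_mk_pos pl hplpos, hpl]
    intro hc
    exact (hψ d1.1).1 (List.append_eq_nil_iff.mp hc).1
  · refine ⟨?_, by rw [toWord_mk_pos sl hslpos]; exact hslpos⟩
    rw [toWord_mk_pos sl hslpos, hsl]
    intro hc
    exact (hψ d3.1).1 (List.append_eq_nil_iff.mp (List.append_eq_nil_iff.mp hc).1).2
  · have hpow : (φ ^ (k + (k + k))) (FreeGroup.of a0) = w3 := by
      rw [pow_add, pow_add, ← hψdef]
      rfl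
    rw [hpow, hL3, toWord_mk_pos pl hplpos, toWord_mk_pos sl hslpos, hpl, hsl, hfu]
    simp [List.append_assoc]
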